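/- The sparsest atomic decomposition size ‖x‖_{𝒜,0} = min{s : x = ∑_{k=1}^s c_k a(f_k,φ_k), c_k ≥ 0} equals the optimal value of the rank minimization problem: minimize rank(Toep(u)) over u ∈ ℂⁿ, t ∈ ℝ subject to [[Toep(u), x],[x*, t]] ⪰ 0. -/

import Mathlib

open Complex Matrix
open scoped ComplexOrder

/-- The atom `a(f, φ)` with entries `e^{i(2πfj + φ)}`, `j = 0, ..., n-1`. -/
noncomputable def atom (n : ℕ) (f φ : ℝ) : Fin n → ℂ :=
  fun j => Complex.exp (Complex.I * (2 * Real.pi * f * j + φ))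

/-- The Hermitian Toeplitz matrix with first column `u`. -/
noncomputable def Toep (n : ℕ) (u : Fin n → ℂ) : Matrix (Fin n) (Fin n) ℂ :=
  fun j k =>
    if (k : ℕ) ≤ (j : ℕ) then u ⟨(j : ℕ) - k, Nat.lt_of_le_of_lt (Nat.sub_le _ _) j.isLt⟩
    else star (u ⟨(k : ℕ) - j, Nat.lt_of_le_of_lt (Nat.sub_le _ _) k.isLt⟩)

/-- The block matrix `[[Toep(u), x], [x*, t]]`. -/
noncomputable def blockMat (n : ℕ) (u x : Fin n → ℂ) (t : ℝ) :
    Matrix (Fin n ⊕ Fin 1) (Fin n ⊕ Fin 1) ℂ :=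
  Matrix.fromBlocks (Toep n u) (fun j _ => x j) (fun _ k => star (x k)) (fun _ _ => (t : ℂ))

set_option maxHeartbeats 1600000
open Submodule Module
open scoped InnerProductSpace

lemma exists_unitary_eigen (m : ℕ) :
    ∀ (E : Type) [NormedAddCommGroup E] [InnerProductSpace ℂ E] [FiniteDimensional ℂ E],
      Module.finrank ℂ E = m → ∀ (U : E →ₗ[ℂ] E),
      (∀ v w : E, ⟪U v, U w⟫_ℂ = ⟪v, w⟫_ℂ) →
      ∃ (e : Fin m → E) (l : Fin m → ℂ), (∀ i, ‖l i‖ = 1) ∧ (∀ i, U (e i) = l i • e i) ∧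
        Submodule.span ℂ (Set.range e) = ⊤ := by
  induction m with
  | zero =>
    intro E _ _ _ hdim U hU
    refine ⟨Fin.elim0, Fin.elim0, fun i => i.elim0, fun i => i.elim0, ?_⟩
    have : Subsingleton E := Module.finrank_zero_iff.mp hdim
    exact Subsingleton.elim _ _
  | succ m ih =>
    intro E _ _ _ hdim U hU
    have : Nontrivial E := Module.nontrivial_of_finrank_pos (by omega : 0 < finrank ℂ E)
    obtain ⟨c, hc⟩ := Module.End.exists_eigenvalue (U : Module.End ℂ E)
    obtain ⟨v, hv⟩ := hc.exists_hasEigenvector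
    have hv0 : v ≠ 0 := hv.right
    have hiv : ⟪v, v⟫_ℂ ≠ 0 := inner_self_ne_zero.mpr hv0
    have hUv : U v = c • v := hv.apply_eq_smul
    have hcc : (starRingEnd ℂ) c * c = 1 := by
      have h := hU v v
      rw [hUv, inner_smul_left, inner_smul_right, ← mul_assoc] at h
      nth_rewrite 2 [← one_mul (⟪v, v⟫_ℂ)] at h
      exact mul_right_cancel₀ hiv h
    have hc0 : c ≠ 0 := by
      intro h; rw [h] at hcc; simp at hcc
    have hcnorm : ‖c‖ = 1 := by
      have h1 : Complex.normSq c = 1 := by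
        have h2 : ((Complex.normSq c : ℂ)) = 1 := by
          rw [Complex.normSq_eq_conj_mul_self]; exact hcc
        exact_mod_cast h2
      have h2 : ‖c‖ ^ 2 = 1 := by
        rw [← Complex.sq_norm] at h1; exact h1
      nlinarith [norm_nonneg c]
    set F := (Submodule.span ℂ {v})ᗮ with hF
    have hdimF : finrank ℂ F = m := by
      have h1 : finrank ℂ (Submodule.span ℂ {v}) + finrank ℂ F = finrank ℂ E :=
        Submodule.finrank_add_finrank_orthogonal (K := Submodule.span ℂ {v})
      rw [finrank_span_singleton hv0, hdim] at h1
      omega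
    have hinner_vw : ∀ w, w ∈ F → ⟪v, w⟫_ℂ = 0 := by
      intro w hw
      exact hw v (Submodule.mem_span_singleton_self v)
    have hmaps : ∀ w ∈ F, U w ∈ F := by
      intro w hw
      rw [hF, Submodule.mem_orthogonal]
      intro y hy
      obtain ⟨a, rfl⟩ := Submodule.mem_span_singleton.mp hy
      rw [inner_smul_left]
      have hvUw : ⟪v, U w⟫_ℂ = 0 := by
        have h1 : U (c⁻¹ • v) = v := by
          rw [LinearMap.map_smul, hUv, smul_smul, inv_mul_cancel₀ hc0, one_smul]
        calc ⟪v, U w⟫_ℂ = ⟪U (c⁻¹ • v), U w⟫_ℂ := by rw [h1]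
          _ = ⟪c⁻¹ • v, w⟫_ℂ := hU _ _
          _ = (starRingEnd ℂ) c⁻¹ * ⟪v, w⟫_ℂ := inner_smul_left _ _ _
          _ = 0 := by rw [hinner_vw w hw, mul_zero]
      rw [hvUw, mul_zero]
    set U' := U.restrict hmaps with hU'def
    have hU' : ∀ a b : F, ⟪U' a, U' b⟫_ℂ = ⟪a, b⟫_ℂ := by
      intro a b
      rw [Submodule.coe_inner, Submodule.coe_inner, hU'def,
        LinearMap.restrict_coe_apply, LinearMap.restrict_coe_apply]
      exact hU _ _
    obtain ⟨e', l', hl'1, hl'2, hspan'⟩ := ih F hdimF U' hU'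
    refine ⟨Fin.cons v (fun i => (e' i : E)), Fin.cons c l', ?_, ?_, ?_⟩
    · intro i
      refine Fin.cases ?_ ?_ i
      · simpa using hcnorm
      · intro j; simpa using hl'1 j
    · intro i
      refine Fin.cases ?_ ?_ i
      · simpa using hUv
      · intro j
        simp only [Fin.cons_succ]
        have : U (e' j : E) = ((U' (e' j) : F) : E) := by
          rw [hU'def, LinearMap.restrict_coe_apply]
        rw [this, hl'2 j]
        simp
    · rw [Fin.range_cons, Submodule.span_insert]
      have hr : Set.range (fun i => ((e' i : F) : E)) = F.subtype '' Set.range e' := by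
        rw [← Set.range_comp]; rfl
      rw [hr, Submodule.span_image, hspan', Submodule.map_top, Submodule.range_subtype]
      exact Submodule.sup_orthogonal_of_hasOrthogonalProjection


lemma exp_two_pi_I' : Complex.exp (((2 * Real.pi : ℝ) : ℂ) * Complex.I) = 1 := by
  push_cast
  rw [show (2 : ℂ) * (Real.pi : ℂ) * Complex.I = 2 * Real.pi * Complex.I by push_cast; ring]
  exact Complex.exp_two_pi_mul_I

/-- every unimodular complex number is `exp (I * 2π f)` for some `f ∈ [0,1)`. -/
lemma exists_freq (μ : ℂ) (h : ‖μ‖ = 1) :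
    ∃ f ∈ Set.Ico (0:ℝ) 1, Complex.exp (Complex.I * (2 * Real.pi * f)) = μ := by
  have hpi := Real.pi_pos
  have harg1 := Complex.arg_le_pi μ
  have harg2 := Complex.neg_pi_lt_arg μ
  have hμ : Complex.exp (μ.arg * Complex.I) = μ := by
    have := Complex.norm_mul_exp_arg_mul_I μ
    rwa [show ‖μ‖ = 1 from h, ofReal_one, one_mul] at this
  by_cases h0 : 0 ≤ μ.arg
  · refine ⟨μ.arg / (2 * Real.pi), ⟨by positivity, ?_⟩, ?_⟩
    · rw [div_lt_one (by positivity)]; nlinarith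
    · rw [show Complex.I * (2 * Real.pi * ((μ.arg / (2 * Real.pi) : ℝ) : ℂ))
          = ((μ.arg / (2 * Real.pi) * (2 * Real.pi) : ℝ) : ℂ) * Complex.I by push_cast; ring,
        div_mul_cancel₀ _ (by positivity : (2 * Real.pi : ℝ) ≠ 0)]
      exact hμ
  · push_neg at h0
    refine ⟨(μ.arg + 2 * Real.pi) / (2 * Real.pi), ⟨by
        apply div_nonneg _ (by positivity); nlinarith, ?_⟩, ?_⟩
    · rw [div_lt_one (by positivity)]; nlinarith
    · rw [show Complex.I * (2 * Real.pi * (((μ.arg + 2 * Real.pi) / (2 * Real.pi) : ℝ) : ℂ))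
          = (((μ.arg + 2 * Real.pi) / (2 * Real.pi) * (2 * Real.pi) : ℝ) : ℂ) * Complex.I by
            push_cast; ring,
        div_mul_cancel₀ _ (by positivity : (2 * Real.pi : ℝ) ≠ 0)]
      rw [show (((μ.arg + 2 * Real.pi : ℝ)) : ℂ) * Complex.I
          = μ.arg * Complex.I + ((2 * Real.pi : ℝ) : ℂ) * Complex.I by push_cast; ring]
      rw [Complex.exp_add, hμ, exp_two_pi_I', mul_one]

/-- polar decomposition adapted to phases in `[0, 2π)`. -/
lemma exists_polar (γ : ℂ) :
    ∃ (cc θ : ℝ), 0 ≤ cc ∧ θ ∈ Set.Ico (0:ℝ) (2 * Real.pi) ∧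
      γ = (cc : ℂ) * Complex.exp (Complex.I * θ) := by
  have hpi := Real.pi_pos
  have harg1 := Complex.arg_le_pi γ
  have harg2 := Complex.neg_pi_lt_arg γ
  have hμ : γ = (‖γ‖ : ℂ) * Complex.exp (γ.arg * Complex.I) :=
    (Complex.norm_mul_exp_arg_mul_I γ).symm
  by_cases h0 : 0 ≤ γ.arg
  · refine ⟨‖γ‖, γ.arg, norm_nonneg γ, ⟨h0, by nlinarith⟩, ?_⟩
    rw [mul_comm Complex.I _]; exact hμ
  · push_neg at h0
    refine ⟨‖γ‖, γ.arg + 2 * Real.pi, norm_nonneg γ, ⟨by nlinarith, by nlinarith⟩, ?_⟩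
    rw [show Complex.I * ((γ.arg + 2 * Real.pi : ℝ) : ℂ)
        = γ.arg * Complex.I + ((2 * Real.pi : ℝ) : ℂ) * Complex.I by push_cast; ring]
    rw [Complex.exp_add, exp_two_pi_I', mul_one]
    exact hμ

/-- pull a phase out of an atom. -/
lemma atom_phase (n : ℕ) (f θ : ℝ) :
    atom n f θ = Complex.exp (Complex.I * θ) • atom n f 0 := by
  funext j
  simp only [atom, Pi.smul_apply, smul_eq_mul, ← Complex.exp_add]
  congr 1
  push_cast
  ring


/-- Any vector is a combination of `n` atoms (Vandermonde argument). -/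
lemma vand_span (n : ℕ) (hn : 0 < n) (x : Fin n → ℂ) :
    ∃ (f : Fin n → ℝ) (z : Fin n → ℂ), (∀ k, f k ∈ Set.Ico (0:ℝ) 1) ∧
      x = ∑ k, z k • atom n (f k) 0 := by
  have hn0 : (n : ℝ) ≠ 0 := Nat.cast_ne_zero.mpr hn.ne'
  set ω : ℂ := Complex.exp (2 * Real.pi * Complex.I / n) with hω
  have hprim : IsPrimitiveRoot ω n := Complex.isPrimitiveRoot_exp n hn.ne'
  set f : Fin n → ℝ := fun k => (k : ℝ) / n with hf
  have hfm : ∀ k : Fin n, f k ∈ Set.Ico (0:ℝ) 1 := by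
    intro k
    constructor
    · positivity
    · rw [div_lt_one (by positivity)]
      exact_mod_cast k.isLt
  have hatom : ∀ (k j : Fin n), atom n (f k) 0 j = (ω ^ (k : ℕ)) ^ (j : ℕ) := by
    intro k j
    rw [← pow_mul, hω, ← Complex.exp_nat_mul]
    simp only [atom, hf]
    congr 1
    push_cast
    field_simp
    ring
  set ζ : Fin n → ℂ := fun k => ω ^ (k : ℕ) with hζ
  set A : Matrix (Fin n) (Fin n) ℂ := (Matrix.vandermonde ζ)ᵀ with hA
  have hAapp : ∀ j k, A j k = atom n (f k) 0 j := by
    intro j k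
    rw [hA, Matrix.transpose_apply, Matrix.vandermonde_apply, hatom]
  have hdet : A.det ≠ 0 := by
    rw [hA, Matrix.det_transpose, Matrix.det_vandermonde]
    rw [Finset.prod_ne_zero_iff]
    intro i _
    rw [Finset.prod_ne_zero_iff]
    intro j hj
    rw [Finset.mem_Ioi] at hj
    refine sub_ne_zero.mpr ?_
    intro hketa
    have := hprim.pow_inj j.isLt i.isLt hketa
    omega
  refine ⟨f, A⁻¹ *ᵥ x, hfm, ?_⟩
  funext j
  have hAx : A *ᵥ (A⁻¹ *ᵥ x) = x := by
    rw [Matrix.mulVec_mulVec, Matrix.mul_nonsing_inv _ (Ne.isUnit hdet), Matrix.one_mulVec]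
  calc x j = (A *ᵥ (A⁻¹ *ᵥ x)) j := by rw [hAx]
    _ = ∑ k, A j k * (A⁻¹ *ᵥ x) k := by rw [Matrix.mulVec, dotProduct]
    _ = (∑ k, (A⁻¹ *ᵥ x) k • atom n (f k) 0) j := by
        rw [Finset.sum_apply]
        refine Finset.sum_congr rfl fun k _ => ?_
        rw [Pi.smul_apply, smul_eq_mul, hAapp, mul_comm]


lemma conj_real_expr (y : ℂ) (hy : (starRingEnd ℂ) y = y) (z : ℂ) (hz : (starRingEnd ℂ) z = z) :
    (starRingEnd ℂ) (y * z) = y * z := by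
  rw [(starRingEnd ℂ).map_mul, hy, hz]

lemma conj_exp_key (f φ : ℝ) (b : ℕ) :
    (starRingEnd ℂ) (Complex.I * (2 * Real.pi * f * b + φ))
      = -(Complex.I * (2 * Real.pi * f * b + φ)) := by
  rw [show ((2 : ℂ) * Real.pi * f * b + φ) = (((2 * Real.pi * f * b + φ : ℝ)) : ℂ) by
    push_cast; ring]
  rw [(starRingEnd ℂ).map_mul, Complex.conj_I, Complex.conj_ofReal]
  ring

lemma conj_exp_key' (f : ℝ) (b : ℕ) :
    (starRingEnd ℂ) (Complex.I * (2 * Real.pi * f * b))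
      = -(Complex.I * (2 * Real.pi * f * b)) := by
  have h := conj_exp_key f 0 b
  simpa using h

lemma exp_conj_key (f φ : ℝ) (a b : ℕ) :
    Complex.exp (Complex.I * (2 * Real.pi * f * a + φ)) *
      (starRingEnd ℂ) (Complex.exp (Complex.I * (2 * Real.pi * f * b + φ)))
    = Complex.exp (Complex.I * (2 * Real.pi * f * ((a : ℂ) - (b : ℂ)))) := by
  rw [← Complex.exp_conj, ← Complex.exp_add, conj_exp_key]
  congr 1
  ring

/-- Easy direction: an `s`-atom decomposition yields a feasible point with rank at most `s`. -/
lemma easy_dir (n s : ℕ) (c f φ : Fin s → ℝ) (hc : ∀ k, 0 ≤ c k) (x : Fin n → ℂ)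
    (hxeq : x = ∑ k, (c k : ℂ) • atom n (f k) (φ k)) :
    ∃ (u : Fin n → ℂ) (t : ℝ), (blockMat n u x t).PosSemidef ∧ (Toep n u).rank ≤ s := by
  classical
  set g : Fin s → (Fin n ⊕ Fin 1) → ℂ :=
    fun k => Sum.elim (atom n (f k) (φ k)) (fun _ => 1) with hg
  set B : Matrix (Fin s) (Fin n ⊕ Fin 1) ℂ :=
    fun k i => (Real.sqrt (c k) : ℂ) * (starRingEnd ℂ) (g k i) with hB
  have hsq : ∀ k : Fin s, ((Real.sqrt (c k) : ℂ)) * (Real.sqrt (c k) : ℂ) = (c k : ℂ) := by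
    intro k
    rw [← Complex.ofReal_mul, Real.mul_self_sqrt (hc k)]
  have hBB : ∀ i j, (Bᴴ * B) i j = ∑ k, (c k : ℂ) * (g k i * (starRingEnd ℂ) (g k j)) := by
    intro i j
    rw [Matrix.mul_apply]
    refine Finset.sum_congr rfl fun k _ => ?_
    rw [Matrix.conjTranspose_apply, hB]
    simp only [star_mul']
    rw [show (star ((Real.sqrt (c k) : ℝ) : ℂ) : ℂ) = ((Real.sqrt (c k) : ℝ) : ℂ) by
      rw [RCLike.star_def, Complex.conj_ofReal]]
    rw [show (star ((starRingEnd ℂ) (g k i)) : ℂ) = g k i by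
      rw [RCLike.star_def, Complex.conj_conj]]
    rw [show ((Real.sqrt (c k) : ℂ)) * g k i * ((Real.sqrt (c k) : ℂ) * (starRingEnd ℂ) (g k j))
        = (((Real.sqrt (c k) : ℂ)) * (Real.sqrt (c k) : ℂ)) * (g k i * (starRingEnd ℂ) (g k j)) by
          ring]
    rw [hsq]
  set u : Fin n → ℂ := fun m => ∑ k, (c k : ℂ) *
    Complex.exp (Complex.I * (2 * Real.pi * (f k) * m)) with hu
  set t : ℝ := ∑ k, c k with ht
  have hToepD : ∀ (a b : Fin n), Toep n u a b
      = ∑ k, (c k : ℂ) * (g k (Sum.inl a) * (starRingEnd ℂ) (g k (Sum.inl b))) := by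
    intro a b
    have hsummand : ∀ k, (c k : ℂ) * (g k (Sum.inl a) * (starRingEnd ℂ) (g k (Sum.inl b)))
        = (c k : ℂ) * Complex.exp (Complex.I * (2 * Real.pi * (f k) * (((a:ℕ) : ℂ) - ((b:ℕ) : ℂ)))) := by
      intro k
      rw [hg]
      simp only [Sum.elim_inl]
      rw [show (atom n (f k) (φ k) a : ℂ)
          = Complex.exp (Complex.I * (2 * Real.pi * (f k) * ((a:ℕ):ℂ) + ((φ k : ℝ) : ℂ))) from rfl]
      rw [show (atom n (f k) (φ k) b : ℂ)
          = Complex.exp (Complex.I * (2 * Real.pi * (f k) * ((b:ℕ):ℂ) + ((φ k : ℝ) : ℂ))) from rfl]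
      rw [exp_conj_key]
    rw [Finset.sum_congr rfl fun k _ => hsummand k]
    by_cases hab : (b : ℕ) ≤ (a : ℕ)
    · rw [Toep, if_pos hab]
      simp only [hu]
      refine Finset.sum_congr rfl fun k _ => ?_
      congr 2
      rw [show (((⟨(a:ℕ)-(b:ℕ), Nat.lt_of_le_of_lt (Nat.sub_le _ _) a.isLt⟩ : Fin n) : ℕ) : ℂ)
          = (((a:ℕ)-(b:ℕ) : ℕ) : ℂ) from rfl]
      push_cast [Nat.cast_sub hab]
      ring
    · push_neg at hab
      rw [Toep, if_neg (by omega)]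
      simp only [hu]
      rw [show ∀ z : ℂ, star z = (starRingEnd ℂ) z from fun _ => rfl, map_sum]
      refine Finset.sum_congr rfl fun k _ => ?_
      rw [(starRingEnd ℂ).map_mul, Complex.conj_ofReal, ← Complex.exp_conj]
      congr 1
      rw [conj_exp_key']
      rw [show (((⟨(b:ℕ)-(a:ℕ), Nat.lt_of_le_of_lt (Nat.sub_le _ _) b.isLt⟩ : Fin n) : ℕ) : ℂ)
          = (((b:ℕ)-(a:ℕ) : ℕ) : ℂ) from rfl]
      push_cast [Nat.cast_sub hab.le]
      ring
  have hblock : blockMat n u x t = Bᴴ * B := by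
    ext i j
    rcases i with a | a <;> rcases j with b | b
    · rw [hBB]
      simp only [blockMat, Matrix.fromBlocks_apply₁₁]
      exact hToepD a b
    · rw [hBB]
      change x a = _
      rw [hxeq, Finset.sum_apply]
      refine Finset.sum_congr rfl fun k _ => ?_
      rw [hg]
      simp only [Sum.elim_inl, Sum.elim_inr, _root_.map_one, mul_one, Pi.smul_apply, smul_eq_mul]
    · rw [hBB]
      change star (x b) = _
      rw [hxeq]
      rw [show ∀ z : ℂ, star z = (starRingEnd ℂ) z from fun _ => rfl]
      rw [Finset.sum_apply, map_sum]
      refine Finset.sum_congr rfl fun k _ => ?_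
      rw [hg]
      simp only [Sum.elim_inl, Sum.elim_inr, one_mul, Pi.smul_apply, smul_eq_mul,
        (starRingEnd ℂ).map_mul, Complex.conj_ofReal]
    · rw [hBB]
      simp only [blockMat, Matrix.fromBlocks_apply₂₂, hg]
      simp only [Sum.elim_inr, _root_.map_one, mul_one, one_mul, ht]
      push_cast
      rfl
  refine ⟨u, t, hblock ▸ Matrix.posSemidef_conjTranspose_mul_self B, ?_⟩
  set D : Matrix (Fin s) (Fin n) ℂ := fun k a => B k (Sum.inl a) with hD
  have hToepDD : Toep n u = Dᴴ * D := by
    ext a b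
    rw [hToepD a b, Matrix.mul_apply]
    refine Finset.sum_congr rfl fun k _ => ?_
    rw [Matrix.conjTranspose_apply, hD, hB]
    simp only [star_mul']
    rw [show (star ((Real.sqrt (c k) : ℝ) : ℂ) : ℂ) = ((Real.sqrt (c k) : ℝ) : ℂ) by
      rw [RCLike.star_def, Complex.conj_ofReal]]
    rw [show (star ((starRingEnd ℂ) (g k (Sum.inl a))) : ℂ) = g k (Sum.inl a) by
      rw [RCLike.star_def, Complex.conj_conj]]
    rw [show ((Real.sqrt (c k) : ℂ)) * g k (Sum.inl a) *
        ((Real.sqrt (c k) : ℂ) * (starRingEnd ℂ) (g k (Sum.inl b)))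
        = (((Real.sqrt (c k) : ℂ)) * (Real.sqrt (c k) : ℂ)) *
          (g k (Sum.inl a) * (starRingEnd ℂ) (g k (Sum.inl b))) by ring]
    rw [hsq]
  calc (Toep n u).rank = (Dᴴ * D).rank := by rw [hToepDD]
    _ = D.rank := Matrix.rank_conjTranspose_mul_self D
    _ ≤ Fintype.card (Fin s) := Matrix.rank_le_card_height D
    _ = s := Fintype.card_fin s

/-- The feasible set of the SDP is nonempty. -/
lemma R_nonempty (n : ℕ) (hn : 0 < n) (x : Fin n → ℂ) :
    ∃ (u : Fin n → ℂ) (t : ℝ), (blockMat n u x t).PosSemidef := by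
  classical
  set u : Fin n → ℂ := fun i => if i = ⟨0, hn⟩ then 1 else 0 with hu
  have hT1 : Toep n u = 1 := by
    ext ⟨a, ha⟩ ⟨b, hb⟩
    rw [Toep]
    simp only [hu, Matrix.one_apply, Fin.mk.injEq]
    by_cases hab : b ≤ a
    · rw [if_pos hab]
      split_ifs with h1 h2
      · rfl
      · exact absurd (by omega : a = b) h2
      · exact absurd (by omega : a - b = 0) h1
      · rfl
    · rw [if_neg hab, if_neg (show ¬(b - a = 0) by omega), if_neg (show ¬(a = b) by omega)]
      exact star_zero _
  set Bx : Matrix (Fin n) (Fin 1) ℂ := fun j _ => x j with hBx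
  set t : ℝ := ∑ j, Complex.normSq (x j) with ht
  set Dm : Matrix (Fin 1) (Fin 1) ℂ := Matrix.of (fun _ _ => (t : ℂ)) with hDm
  have hblock : blockMat n u x t = Matrix.fromBlocks 1 Bx Bxᴴ Dm := by
    rw [blockMat, hT1]
    have h3 : (fun (_ : Fin 1) k => star (x k)) = Bxᴴ := by
      funext i k
      rw [Matrix.conjTranspose_apply, hBx]
    have h4 : (fun (_ : Fin 1) (_ : Fin 1) => ((t : ℝ) : ℂ)) = Dm := rfl
    rw [h3, h4]
  haveI : Invertible (1 : Matrix (Fin n) (Fin n) ℂ) := invertibleOne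
  have hschur : (Dm - Bxᴴ * (1 : Matrix (Fin n) (Fin n) ℂ)⁻¹ * Bx).PosSemidef := by
    have hz : (Dm - Bxᴴ * (1 : Matrix (Fin n) (Fin n) ℂ)⁻¹ * Bx)
        = (0 : Matrix (Fin 1) (Fin 1) ℂ) := by
      have hinv : (1 : Matrix (Fin n) (Fin n) ℂ)⁻¹ = 1 :=
        Matrix.inv_eq_left_inv (by rw [one_mul])
      ext i j
      rw [hinv, Matrix.mul_one]
      simp only [Matrix.sub_apply, Matrix.mul_apply, Matrix.conjTranspose_apply,
        Matrix.zero_apply, hDm, Matrix.of_apply, ht]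
      rw [sub_eq_zero]
      push_cast
      refine Finset.sum_congr rfl fun j' _ => ?_
      rw [hBx]
      rw [show ∀ z : ℂ, star z = (starRingEnd ℂ) z from fun _ => rfl]
      rw [Complex.normSq_eq_conj_mul_self]
    rw [hz]
    exact Matrix.PosSemidef.zero
  refine ⟨u, t, ?_⟩
  rw [hblock]
  rw [Matrix.PosDef.fromBlocks₁₁ Bx Dm Matrix.PosDef.one]
  exact hschur


/-- Hard direction: a feasible point of the SDP with rank `r` gives an `r`-atom span of `x`. -/
lemma hard_dir (n : ℕ) (hn : 0 < n) (u x : Fin n → ℂ) (t : ℝ)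
    (hpsd : (blockMat n u x t).PosSemidef) :
    ∃ (f : Fin ((Toep n u).rank) → ℝ) (z : Fin ((Toep n u).rank) → ℂ),
      (∀ k, f k ∈ Set.Ico (0:ℝ) 1) ∧ x = ∑ k, z k • atom n (f k) 0 := by
  classical
  by_cases hrn : (Toep n u).rank = n
  · obtain ⟨f, z, hf, hx⟩ := vand_span n hn x
    refine ⟨fun k => f (finCongr hrn k), fun k => z (finCongr hrn k),
      fun k => hf _, ?_⟩
    rw [hx]
    exact (Fintype.sum_equiv (finCongr hrn) _ _ (fun k => rfl)).symm
  · have hrlt : (Toep n u).rank < n :=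
      lt_of_le_of_ne (le_trans (Matrix.rank_le_card_height _) (by simp)) hrn
    open MatrixOrder in obtain ⟨B, hB⟩ := CStarAlgebra.nonneg_iff_eq_star_mul_self.mp hpsd.nonneg
    rw [Matrix.star_eq_conjTranspose] at hB
    set e2 : EuclideanSpace ℂ (Fin n ⊕ Fin 1) ≃ₗ[ℂ] ((Fin n ⊕ Fin 1) → ℂ) :=
      WithLp.linearEquiv 2 ℂ ((Fin n ⊕ Fin 1) → ℂ) with he2
    set cvec : (Fin n ⊕ Fin 1) → EuclideanSpace ℂ (Fin n ⊕ Fin 1) :=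
      fun i => e2.symm (fun k => B k i) with hcvec
    have hgram : ∀ i j, ⟪cvec i, cvec j⟫_ℂ = blockMat n u x t i j := by
      intro i j
      rw [hB, Matrix.mul_apply, PiLp.inner_apply]
      refine Finset.sum_congr rfl fun k _ => ?_
      rw [RCLike.inner_apply, Matrix.conjTranspose_apply]
      exact mul_comm _ _
    set w : ℕ → EuclideanSpace ℂ (Fin n ⊕ Fin 1) :=
      fun m => if h : m < n then cvec (Sum.inl ⟨m, h⟩) else 0 with hw
    have hwlt : ∀ (m : ℕ) (h : m < n), w m = cvec (Sum.inl ⟨m, h⟩) := fun m h => dif_pos h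
    have hxw : ∀ j : Fin n, x j = ⟪w j, cvec (Sum.inr 0)⟫_ℂ := by
      intro j
      rw [hwlt j j.isLt, hgram]
      simp [blockMat]
      rfl
    have hsg : ∀ j k : ℕ, j + 1 < n → k + 1 < n →
        ⟪w (j+1), w (k+1)⟫_ℂ = ⟪w j, w k⟫_ℂ := by
      intro j k hj hk
      rw [hwlt _ hj, hwlt _ hk, hwlt _ (by omega : j < n), hwlt _ (by omega : k < n),
        hgram, hgram]
      show Toep n u _ _ = Toep n u _ _
      rw [Toep, Toep]
      by_cases hjk : k ≤ j
      · rw [if_pos (by simp only [Fin.val_mk]; omega), if_pos (by simp only [Fin.val_mk]; omega)]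
        congr 1
        apply Fin.ext
        simp only [Fin.val_mk]
        omega
      · rw [if_neg (by simp only [Fin.val_mk]; omega), if_neg (by simp only [Fin.val_mk]; omega)]
        congr 2
        apply Fin.ext
        simp only [Fin.val_mk]
        omega
    -- shifting relations
    have hshift : ∀ (a : ℕ → ℂ) (m : ℕ),
        (∑ j ∈ Finset.range m, a j • w j) = 0 →
        ∀ i, m + i ≤ n → (∑ j ∈ Finset.range m, a j • w (j + i)) = 0 := by
      intro a m hrel0 i
      induction i with
      | zero => intro _; simpa using hrel0
      | succ i ih =>
        intro hmi
        have hi := ih (by omega)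
        have hinn : ⟪∑ j ∈ Finset.range m, a j • w (j + (i+1)),
            ∑ j ∈ Finset.range m, a j • w (j + (i+1))⟫_ℂ
            = ⟪∑ j ∈ Finset.range m, a j • w (j + i),
              ∑ j ∈ Finset.range m, a j • w (j + i)⟫_ℂ := by
          simp only [sum_inner, inner_sum, inner_smul_left, inner_smul_right]
          refine Finset.sum_congr rfl fun j hj => ?_
          rw [Finset.mem_range] at hj
          congr 1
          refine Finset.sum_congr rfl fun k hk => ?_
          rw [Finset.mem_range] at hk
          congr 1
          rw [show j + (i+1) = (j + i) + 1 from rfl, show k + (i+1) = (k + i) + 1 from rfl,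
            hsg _ _ (by omega) (by omega)]
        rw [hi, inner_zero_right] at hinn
        exact inner_self_eq_zero.mp hinn
    -- the span of the Gram vectors and its dimension
    set W : Submodule ℂ (EuclideanSpace ℂ (Fin n ⊕ Fin 1)) :=
      Submodule.span ℂ (Set.range (fun j : Fin n => w j)) with hWdef
    set C0 : Matrix (Fin n ⊕ Fin 1) (Fin n) ℂ := Matrix.of (fun i j => B i (Sum.inl j)) with hC0
    have hTC : Toep n u = C0ᴴ * C0 := by
      ext a b
      have h1 : Toep n u a b = blockMat n u x t (Sum.inl a) (Sum.inl b) := by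
        simp [blockMat]
        rfl
      rw [h1, hB, Matrix.mul_apply, Matrix.mul_apply]
      exact Finset.sum_congr rfl fun k _ => rfl
    have hfun : (fun j : Fin n => w (j : ℕ)) = (⇑e2.symm ∘ C0ᵀ) := by
      funext j
      rw [hwlt _ j.isLt]
      rfl
    have hWmap : W = Submodule.map (e2.symm : ((Fin n ⊕ Fin 1) → ℂ) →ₗ[ℂ] _)
        (Submodule.span ℂ (Set.range C0ᵀ)) := by
      rw [hWdef, hfun, Set.range_comp (f := C0ᵀ) (g := ⇑e2.symm)]
      exact Submodule.span_image (e2.symm : ((Fin n ⊕ Fin 1) → ℂ) →ₗ[ℂ] EuclideanSpace ℂ (Fin n ⊕ Fin 1))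
    have hdimW : finrank ℂ W = (Toep n u).rank := by
      rw [hTC, Matrix.rank_conjTranspose_mul_self, Matrix.rank_eq_finrank_span_cols, hWmap]
      exact LinearEquiv.finrank_map_eq _ _
    set r := (Toep n u).rank with hr
    -- membership of all w m in W
    have hmemW : ∀ m : ℕ, w m ∈ W := by
      intro m
      by_cases h : m < n
      · exact Submodule.subset_span ⟨⟨m, h⟩, rfl⟩
      · rw [hw]
        simp only [dif_neg h]
        exact Submodule.zero_mem W
    -- linear independence of initial segments with no dependency
    set P : ℕ → Prop := fun m => w m ∈ Submodule.span ℂ (Set.range (fun j : Fin m => w j))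
      with hP
    have hindk : ∀ k : ℕ, (∀ m, m < k → ¬ P m) →
        LinearIndependent ℂ (fun j : Fin k => w (j : ℕ)) := by
      intro k
      induction k with
      | zero => intro _; exact linearIndependent_empty_type
      | succ k ih =>
        intro hnp
        have hsnoc : (fun j : Fin (k+1) => w (j : ℕ))
            = Fin.snoc (fun j : Fin k => w (j : ℕ)) (w k) := by
          funext j
          refine Fin.lastCases ?_ ?_ j
          · rw [Fin.snoc_last]; rfl
          · intro i; rw [Fin.snoc_castSucc]; rfl
        rw [hsnoc, linearIndependent_fin_snoc]
        exact ⟨ih (fun m hm => hnp m (by omega)), hnp k (by omega)⟩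
    -- existence of a dependency index ≤ r
    have hPex : ∃ m, P m := by
      by_contra hno
      push_neg at hno
      have hind := hindk (r+1) (fun m _ => hno m)
      have hcard := finrank_span_eq_card hind
      have hle : Submodule.span ℂ (Set.range (fun j : Fin (r+1) => w (j : ℕ))) ≤ W :=
        Submodule.span_le.mpr (by rintro _ ⟨j, rfl⟩; exact hmemW j)
      have := Submodule.finrank_mono hle
      rw [hcard, hdimW] at this
      simp at this
    set d := Nat.find hPex with hd
    have hPd : P d := Nat.find_spec hPex
    have hnd : ∀ m, m < d → ¬ P m := fun m hm => Nat.find_min hPex hm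
    have hdle : d ≤ r := by
      by_contra hgt
      push_neg at hgt
      -- then w 0 .. w r are independent (no P m for m ≤ r), contradiction as above
      have hind := hindk (r+1) (fun m hm => hnd m (by omega))
      have hcard := finrank_span_eq_card hind
      have hle : Submodule.span ℂ (Set.range (fun j : Fin (r+1) => w (j : ℕ))) ≤ W :=
        Submodule.span_le.mpr (by rintro _ ⟨j, rfl⟩; exact hmemW j)
      have := Submodule.finrank_mono hle
      rw [hcard, hdimW] at this
      simp at this
    have hindep : LinearIndependent ℂ (fun j : Fin d => w (j : ℕ)) := hindk d hnd
    obtain ⟨bco, hbco⟩ := (mem_span_range_iff_exists_fun ℂ).mp hPd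
    -- master relation and its shifts
    set aco : ℕ → ℂ := fun j => if h : j < d then bco ⟨j, h⟩ else -1 with haco
    have hmaster : (∑ j ∈ Finset.range (d+1), aco j • w j) = 0 := by
      rw [Finset.sum_range_succ]
      have h1 : (∑ j ∈ Finset.range d, aco j • w j) = ∑ j : Fin d, bco j • w (j : ℕ) := by
        rw [← Fin.sum_univ_eq_sum_range (fun j => aco j • w j) d]
        refine Finset.sum_congr rfl fun j _ => ?_
        rw [haco]
        simp only [dif_pos j.isLt]
      rw [h1, hbco, haco]
      simp
    have hrel : ∀ i, d + i < n → w (d + i) = ∑ j : Fin d, bco j • w ((j : ℕ) + i) := by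
      intro i hdi
      have h0 := hshift aco (d+1) hmaster i (by omega)
      rw [Finset.sum_range_succ] at h0
      have h1 : (∑ j ∈ Finset.range d, aco j • w (j + i))
          = ∑ j : Fin d, bco j • w ((j : ℕ) + i) := by
        rw [← Fin.sum_univ_eq_sum_range (fun j => aco j • w (j + i)) d]
        refine Finset.sum_congr rfl fun j _ => ?_
        rw [haco]
        simp only [dif_pos j.isLt]
      rw [h1] at h0
      rw [haco] at h0
      simp only [dif_neg (lt_irrefl d)] at h0
      have hms : (-1 : ℂ) • w (d + i) = -(w (d + i)) := by simp
      rw [hms, add_neg_eq_zero] at h0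
      exact h0.symm
    -- span of the first d vectors is everything
    set WS : Submodule ℂ (EuclideanSpace ℂ (Fin n ⊕ Fin 1)) :=
      Submodule.span ℂ (Set.range (fun j : Fin d => w (j : ℕ))) with hWS
    have hWSall : ∀ m : ℕ, w m ∈ WS := by
      intro m
      induction m using Nat.strong_induction_on with
      | _ m ihm =>
        by_cases hmn : m < n
        · by_cases hmd : m < d
          · exact Submodule.subset_span ⟨⟨m, hmd⟩, rfl⟩
          · push_neg at hmd
            have hi := hrel (m - d) (by omega)
            rw [show d + (m - d) = m by omega] at hi
            rw [hi]
            refine Submodule.sum_mem WS fun j _ => Submodule.smul_mem WS _ ?_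
            exact ihm ((j : ℕ) + (m - d)) (by have := j.isLt; omega)
        · rw [hw]
          simp only [dif_neg hmn]
          exact Submodule.zero_mem WS
    have hWSW : WS = W := by
      apply le_antisymm
      · exact Submodule.span_le.mpr (by rintro _ ⟨j, rfl⟩; exact hmemW (j : ℕ))
      · exact Submodule.span_le.mpr (by rintro _ ⟨j, rfl⟩; exact hWSall (j : ℕ))
    have hdr : d = r := by
      have h1 : finrank ℂ WS = d := by
        rw [hWS, finrank_span_eq_card hindep, Fintype.card_fin]
      rw [hWSW, hdimW] at h1
      exact h1.symm
    -- basis of W from the first d = r vectors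
    letI : NormedAddCommGroup W := Submodule.normedAddCommGroup W
    letI : InnerProductSpace ℂ W := Submodule.innerProductSpace W
    have hmemW' : ∀ m : ℕ, w m ∈ W := hmemW
    set wW : ℕ → W := fun m => ⟨w m, hWSW ▸ hWSall m⟩ with hwW
    set bfam : Fin d → W := fun j => wW (j : ℕ) with hbfam
    have hindepW : LinearIndependent ℂ bfam := by
      apply LinearIndependent.of_comp W.subtype
      exact hindep
    have hspanW : ⊤ ≤ Submodule.span ℂ (Set.range bfam) := by
      have hmap : Submodule.map W.subtype (Submodule.span ℂ (Set.range bfam))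
          = Submodule.map W.subtype ⊤ := by
        rw [Submodule.map_top, Submodule.range_subtype, ← Submodule.span_image]
        rw [show W.subtype '' Set.range bfam = Set.range (fun j : Fin d => w (j : ℕ)) by
          rw [← Set.range_comp]; rfl]
        rw [← hWS, hWSW]
      have := Submodule.map_injective_of_injective W.injective_subtype hmap
      rw [this]
    set b : Basis (Fin d) ℂ W := Basis.mk hindepW hspanW with hbB
    set U : W →ₗ[ℂ] W := b.constr ℂ (fun j : Fin d => wW ((j : ℕ) + 1)) with hU
    have hUb : ∀ j : Fin d, U (bfam j) = wW ((j : ℕ) + 1) := by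
      intro j
      have : bfam j = b j := by rw [hbB, Basis.mk_apply]
      rw [this, hU, Basis.constr_basis]
    -- relation among the wW (in W)
    have hrelW : ∀ i, d + i < n → wW (d + i) = ∑ j : Fin d, bco j • wW ((j : ℕ) + i) := by
      intro i hi
      apply Subtype.ext
      push_cast [hwW]
      rw [hrel i hi]
    -- U shifts all wW
    have hUw : ∀ m : ℕ, m + 1 < n → U (wW m) = wW (m + 1) := by
      intro m
      induction m using Nat.strong_induction_on with
      | _ m ihm =>
        intro hm1
        by_cases hmd : m < d
        · exact hUb ⟨m, hmd⟩
        · push_neg at hmd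
          have h1 := hrelW (m - d) (by omega)
          have h2 := hrelW (m - d + 1) (by omega)
          rw [show d + (m - d) = m by omega] at h1
          rw [show d + (m - d + 1) = m + 1 by omega] at h2
          rw [h1, map_sum]
          rw [h2]
          refine Finset.sum_congr rfl fun j _ => ?_
          rw [LinearMap.map_smul]
          congr 1
          have hjm : (j : ℕ) + (m - d) < m := by have := j.isLt; omega
          rw [ihm _ hjm (by omega)]
          exact congrArg wW (by omega)
    have hUpow : ∀ m : ℕ, m < n → wW m = (U ^ m) (wW 0) := by
      intro m
      induction m with
      | zero => intro _; simp
      | succ m ihm =>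
        intro hm
        rw [pow_succ', Module.End.mul_apply, ← ihm (by omega), hUw m hm]
    -- U is inner-product preserving
    have hbb : ∀ j k : Fin d, ⟪U (bfam j), U (bfam k)⟫_ℂ = ⟪bfam j, bfam k⟫_ℂ := by
      intro j k
      rw [hUb, hUb]
      rw [Submodule.coe_inner, Submodule.coe_inner]
      have hj1 : (j : ℕ) + 1 < n := by have := j.isLt; omega
      have hk1 : (k : ℕ) + 1 < n := by have := k.isLt; omega
      exact hsg _ _ hj1 hk1
    have hUiso : ∀ y z : W, ⟪U y, U z⟫_ℂ = ⟪y, z⟫_ℂ := by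
      intro y z
      have hby : y = ∑ j, b.repr y j • bfam j := by
        conv_lhs => rw [← b.sum_repr y]
        refine Finset.sum_congr rfl fun j _ => ?_
        rw [hbB, Basis.mk_apply]
      have hbz : z = ∑ j, b.repr z j • bfam j := by
        conv_lhs => rw [← b.sum_repr z]
        refine Finset.sum_congr rfl fun j _ => ?_
        rw [hbB, Basis.mk_apply]
      rw [hby, hbz]
      simp only [map_sum, LinearMap.map_smul, sum_inner, inner_sum, inner_smul_left,
        inner_smul_right]
      refine Finset.sum_congr rfl fun j _ => ?_
      congr 1
      refine Finset.sum_congr rfl fun k _ => ?_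
      congr 1
      exact hbb k j
    -- spectral decomposition of U
    have hfinW : finrank ℂ W = d := by rw [hdimW, hdr]
    obtain ⟨ev, l, hl, hUev, hsp⟩ := exists_unitary_eigen d W hfinW U hUiso
    have hw0 : wW 0 ∈ Submodule.span ℂ (Set.range ev) := by
      rw [hsp]; exact Submodule.mem_top
    obtain ⟨al, hal⟩ := (mem_span_range_iff_exists_fun ℂ).mp hw0
    have hUpev : ∀ (p : ℕ) (m : Fin d), (U ^ p) (ev m) = (l m) ^ p • ev m := by
      intro p m
      induction p with
      | zero => simp
      | succ p ihp =>
        rw [pow_succ', Module.End.mul_apply, ihp, LinearMap.map_smul, hUev, smul_smul,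
          pow_succ, mul_comm]
    -- frequencies
    have hfreq : ∀ m : Fin d, ∃ f ∈ Set.Ico (0:ℝ) 1,
        Complex.exp (Complex.I * (2 * Real.pi * f)) = (starRingEnd ℂ) (l m) := by
      intro m
      exact exists_freq _ (by rw [RCLike.norm_conj]; exact hl m)
    choose ff hff1 hff2 using hfreq
    set zz : Fin d → ℂ :=
      fun m => (starRingEnd ℂ) (al m) * ⟪((ev m : W) : EuclideanSpace ℂ (Fin n ⊕ Fin 1)),
        cvec (Sum.inr 0)⟫_ℂ with hzz
    -- final formula
    have hxj : ∀ j : Fin n, x j = ∑ m : Fin d, zz m * ((starRingEnd ℂ) (l m)) ^ (j : ℕ) := by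
      intro j
      rw [hxw j]
      have h1 : w (j : ℕ) = ((wW (j : ℕ) : W) : EuclideanSpace ℂ (Fin n ⊕ Fin 1)) := rfl
      rw [h1, hUpow (j : ℕ) j.isLt, ← hal, map_sum]
      have h2 : ∀ m : Fin d, (U ^ (j : ℕ)) (al m • ev m) = (al m * (l m) ^ (j : ℕ)) • ev m := by
        intro m
        rw [LinearMap.map_smul, hUpev, smul_smul]
      rw [Finset.sum_congr rfl fun m _ => h2 m]
      rw [show ((((∑ m : Fin d, (al m * (l m) ^ (j : ℕ)) • ev m : W)) :
          EuclideanSpace ℂ (Fin n ⊕ Fin 1)))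
          = ∑ m : Fin d, (al m * (l m) ^ (j : ℕ)) • ((ev m : W) :
            EuclideanSpace ℂ (Fin n ⊕ Fin 1)) by push_cast; rfl]
      rw [sum_inner]
      refine Finset.sum_congr rfl fun m _ => ?_
      rw [inner_smul_left, hzz]
      rw [_root_.map_mul, _root_.map_pow]
      ring
    -- package up, transporting Fin d to Fin r
    refine ⟨fun k => ff (finCongr hdr.symm k), fun k => zz (finCongr hdr.symm k),
      fun k => hff1 _, ?_⟩
    funext j
    rw [hxj j]
    rw [show (∑ k : Fin r, zz (finCongr hdr.symm k) •
        atom n (ff (finCongr hdr.symm k)) 0) j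
        = ∑ k : Fin r, zz (finCongr hdr.symm k) * atom n (ff (finCongr hdr.symm k)) 0 j by
      rw [Finset.sum_apply]; rfl]
    rw [Fintype.sum_equiv (finCongr hdr.symm) _
      (fun m : Fin d => zz m * atom n (ff m) 0 j) (fun k => rfl)]
    refine Finset.sum_congr rfl fun m _ => ?_
    congr 1
    rw [show atom n (ff m) 0 j = Complex.exp (Complex.I * (2 * Real.pi * (ff m) * (j : ℕ))) by
      rw [atom]; norm_num]
    rw [← hff2 m, ← Complex.exp_nat_mul]
    congr 1
    ring


/-- The sparsest atomic decomposition size `‖x‖_{𝒜,0}` equals the optimal value of the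
Toeplitz rank minimization problem. -/
theorem atomic_l0_eq_rank_min (n : ℕ) (hn : 0 < n) (x : Fin n → ℂ) (hx : x ≠ 0) :
    sInf {s : ℕ | ∃ (c : Fin s → ℝ) (f φ : Fin s → ℝ),
        (∀ k, 0 ≤ c k) ∧ (∀ k, f k ∈ Set.Ico (0 : ℝ) 1) ∧
        (∀ k, φ k ∈ Set.Ico (0 : ℝ) (2 * Real.pi)) ∧
        x = ∑ k, (c k : ℂ) • atom n (f k) (φ k)} =
      sInf {r : ℕ | ∃ (u : Fin n → ℂ) (t : ℝ),
        (blockMat n u x t).PosSemidef ∧ r = (Toep n u).rank} := by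
  classical
  set LS : Set ℕ := {s : ℕ | ∃ (c : Fin s → ℝ) (f φ : Fin s → ℝ),
      (∀ k, 0 ≤ c k) ∧ (∀ k, f k ∈ Set.Ico (0 : ℝ) 1) ∧
      (∀ k, φ k ∈ Set.Ico (0 : ℝ) (2 * Real.pi)) ∧
      x = ∑ k, (c k : ℂ) • atom n (f k) (φ k)} with hLS
  set RS : Set ℕ := {r : ℕ | ∃ (u : Fin n → ℂ) (t : ℝ),
      (blockMat n u x t).PosSemidef ∧ r = (Toep n u).rank} with hRS
  obtain ⟨u0, t0, hpsd0⟩ := R_nonempty n hn x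
  have hRne : RS.Nonempty := ⟨(Toep n u0).rank, u0, t0, hpsd0, rfl⟩
  have hRL : ∀ r ∈ RS, r ∈ LS := by
    rintro r ⟨u, t, hpsd, rfl⟩
    obtain ⟨f, z, hf, hxz⟩ := hard_dir n hn u x t hpsd
    choose cc th hcc hth hpol using fun k => exists_polar (z k)
    refine ⟨cc, f, th, hcc, hf, hth, ?_⟩
    rw [hxz]
    refine Finset.sum_congr rfl fun k _ => ?_
    rw [atom_phase n (f k) (th k), smul_smul, ← hpol k]
  have hLR : ∀ s ∈ LS, ∃ r ∈ RS, r ≤ s := by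
    rintro s ⟨c, f, φ, hc, hf, hφ, hxe⟩
    obtain ⟨u, t, hpsd, hrle⟩ := easy_dir n s c f φ hc x hxe
    exact ⟨(Toep n u).rank, ⟨u, t, hpsd, rfl⟩, hrle⟩
  have h1 : sInf LS ≤ sInf RS := Nat.sInf_le (hRL _ (Nat.sInf_mem hRne))
  have hLne : LS.Nonempty := ⟨_, hRL _ (Nat.sInf_mem hRne)⟩
  obtain ⟨r, hrR, hrle⟩ := hLR _ (Nat.sInf_mem hLne)
  exact le_antisymm h1 (le_trans (Nat.sInf_le hrR) hrle)
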